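/- Let (G,σ) be a binary-explainable BMG with vertex set L and binary-refinable tree (T,σ). Then every tree on leaf set L that displays all triples of R^bin(G,σ) is a refinement of (T,σ). In particular, every binary tree that explains (G,σ) is a refinement of (T,σ). -/

import Mathlib

/-- A rooted phylogenetic tree with leaf set `V`, encoded by its hierarchy of clusters
(the cluster of a vertex is the set of leaves below it; inner vertices of a phylogenetic
tree have at least two children, so vertices correspond bijectively to clusters). -/
structure PhyloTree (V : Type*) where
  clusters : Set (Set V)
  nonempty_of_mem : ∀ A ∈ clusters, A.Nonempty
  univ_mem : Set.univ ∈ clusters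
  singleton_mem : ∀ v : V, {v} ∈ clusters
  nested : ∀ A ∈ clusters, ∀ B ∈ clusters, A ⊆ B ∨ B ⊆ A ∨ Disjoint A B

namespace PhyloTree

variable {V : Type*}

/-- The cluster of the last common ancestor of `x` and `y`: the smallest cluster
containing both (the clusters containing `x` and `y` form a chain, so their
intersection is the smallest one). -/
def lca (T : PhyloTree V) (x y : V) : Set V :=
  ⋂₀ {A | A ∈ T.clusters ∧ x ∈ A ∧ y ∈ A}

/-- The rooted triple `xy|z` (on three pairwise distinct leaves) is displayed by `T`:
`lca(x,y) ≺ lca(x,z) = lca(y,z)`. -/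
def Displays (T : PhyloTree V) (x y z : V) : Prop :=
  x ≠ y ∧ x ≠ z ∧ y ≠ z ∧ T.lca x y ⊂ T.lca x z ∧ T.lca x z = T.lca y z

/-- `T` displays every triple of `R`; a triple `(x, y, z)` encodes `xy|z`. -/
def DisplaysSet (T : PhyloTree V) (R : Set (V × V × V)) : Prop :=
  ∀ t ∈ R, T.Displays t.1 t.2.1 t.2.2

/-- `r(T)`, the set of triples displayed by `T`. -/
def triples (T : PhyloTree V) : Set (V × V × V) :=
  {t | T.Displays t.1 t.2.1 t.2.2}

/-- `T` is binary: every inner vertex (cluster with at least two leaves) has exactly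
two children, i.e. splits into two disjoint proper subclusters. -/
def IsBinary (T : PhyloTree V) : Prop :=
  ∀ A ∈ T.clusters, 1 < A.ncard →
    ∃ B ∈ T.clusters, ∃ D ∈ T.clusters,
      Disjoint B D ∧ B ∪ D = A ∧ B ⊂ A ∧ D ⊂ A

/-- `T'` is a refinement of `T`: they have the same leaf set and `T` is obtained from
`T'` by contracting inner edges, i.e. every cluster of `T` is a cluster of `T'`. -/
def Refines (T' T : PhyloTree V) : Prop :=
  T.clusters ⊆ T'.clusters

end PhyloTree

section BMG

variable {V C : Type*}

/-- `y` is a best match of `x` in the leaf-colored tree `(T,σ)`. -/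
def bestMatch (T : PhyloTree V) (σ : V → C) (x y : V) : Prop :=
  σ x ≠ σ y ∧ ∀ y' : V, σ y' = σ y → T.lca x y ⊆ T.lca x y'

/-- The leaf-colored tree `(T,σ)` explains the vertex-colored digraph `(E,σ)`,
i.e. `(E,σ)` is the best match graph of `(T,σ)`. -/
def Explains (T : PhyloTree V) (σ : V → C) (E : V → V → Prop) : Prop :=
  ∀ x y, E x y ↔ bestMatch T σ x y

/-- `(E,σ)` is a best match graph. -/
def IsBMG (E : V → V → Prop) (σ : V → C) : Prop :=
  ∃ T : PhyloTree V, Explains T σ E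

/-- `(E,σ)` is binary-explainable. -/
def BinaryExplainable (E : V → V → Prop) (σ : V → C) : Prop :=
  ∃ T : PhyloTree V, T.IsBinary ∧ Explains T σ E

/-- The informative triples `R(G,σ)`: `(a,b,b')` encodes `ab|b'`. -/
def informativeTriples (E : V → V → Prop) (σ : V → C) : Set (V × V × V) :=
  {t | σ t.1 ≠ σ t.2.1 ∧ σ t.2.1 = σ t.2.2 ∧ E t.1 t.2.1 ∧ ¬ E t.1 t.2.2}

/-- The forbidden triples `F(G,σ)`: `(a,b,b')` encodes `ab|b'`. -/
def forbiddenTriples (E : V → V → Prop) (σ : V → C) : Set (V × V × V) :=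
  {t | σ t.1 ≠ σ t.2.1 ∧ σ t.2.1 = σ t.2.2 ∧ t.2.1 ≠ t.2.2 ∧ E t.1 t.2.1 ∧ E t.1 t.2.2}

/-- The extended triple set `R^bin(G,σ) = R(G,σ) ∪ {bb'|a : ab|b' ∈ F(G,σ)}`. -/
def Rbin (E : V → V → Prop) (σ : V → C) : Set (V × V × V) :=
  informativeTriples E σ ∪ {t | (t.2.2, t.1, t.2.1) ∈ forbiddenTriples E σ}

/-- Properly colored: arcs only between vertices of distinct colors. -/
def ProperlyColored (E : V → V → Prop) (σ : V → C) : Prop :=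
  ∀ x y, E x y → σ x ≠ σ y

/-- sf-colored: properly colored and every vertex has, for each color (of the graph)
different from its own, at least one out-neighbor of that color. -/
def SfColored (E : V → V → Prop) (σ : V → C) : Prop :=
  ProperlyColored E σ ∧ ∀ x y : V, σ y ≠ σ x → ∃ z, E x z ∧ σ z = σ y

/-- A triple set is consistent if some tree displays all of its triples. -/
def Consistent (R : Set (V × V × V)) : Prop :=
  ∃ T : PhyloTree V, T.DisplaysSet R

/-- The closure `cl(R)`: all triples displayed by every tree displaying `R`. -/
def tripleClosure (R : Set (V × V × V)) : Set (V × V × V) :=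
  {t | ∀ T : PhyloTree V, T.DisplaysSet R → T.Displays t.1 t.2.1 t.2.2}

/-- `(T,σ)` is a least resolved tree for `(E,σ)`: it explains `(E,σ)` and no tree
obtained from it by contracting an edge (i.e. by removing a non-root inner cluster)
explains `(E,σ)`. -/
def IsLRT (T : PhyloTree V) (σ : V → C) (E : V → V → Prop) : Prop :=
  Explains T σ E ∧
    ∀ A ∈ T.clusters, A ≠ Set.univ → 1 < A.ncard →
      ∀ T' : PhyloTree V, T'.clusters = T.clusters \ {A} → ¬ Explains T' σ E

end BMG

section Aho

variable {V : Type*}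

/-- Adjacency in the Aho graph `[R,L]`: `x` and `y` are joined whenever `xy|z ∈ R`
for some `z ∈ L` (only triples with all leaves in `L` are taken into account). -/
def ahoAdj (R : Set (V × V × V)) (L : Set V) (x y : V) : Prop :=
  x ∈ L ∧ y ∈ L ∧ ∃ z ∈ L, (x, y, z) ∈ R ∨ (y, x, z) ∈ R

/-- The vertex set of the connected component of `x` in the Aho graph `[R,L]`. -/
def ahoComponent (R : Set (V × V × V)) (L : Set V) (x : V) : Set V :=
  {y | Relation.ReflTransGen (ahoAdj R L) x y}

/-- The clusters of the Aho tree `Aho(R, V)`: the full leaf set, and recursively the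
connected components of the Aho graphs. -/
inductive IsAhoCluster (R : Set (V × V × V)) : Set V → Prop
  | univ : IsAhoCluster R Set.univ
  | component {L : Set V} {x : V} :
      IsAhoCluster R L → x ∈ L → IsAhoCluster R (ahoComponent R L x)

/-- `T` is the Aho tree (`BUILD` tree) of the triple set `R` on the full leaf set. -/
def IsAhoTree (R : Set (V × V × V)) (T : PhyloTree V) : Prop :=
  T.clusters = {A | IsAhoCluster R A}

/-- The union of the leaf sets of the triples in `R`. -/
def tripleLeaves (R : Set (V × V × V)) : Set V :=
  {v | ∃ t ∈ R, v = t.1 ∨ v = t.2.1 ∨ v = t.2.2}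

end Aho


/- ===================== Auxiliary development ===================== -/

section Aux

variable {V Γ : Type*} [Fintype V]

lemma ssub_subset {A B : Set V} (h : A ⊂ B) : A ⊆ B :=
  (Set.ssubset_iff_subset_ne.mp h).1

lemma ssub_absurd {A B : Set V} (h1 : A ⊂ B) (h2 : B ⊆ A) : False := by
  rcases Set.ssubset_iff_subset_ne.mp h1 with ⟨hs, hne⟩
  exact hne (hs.antisymm h2)

lemma ssub_of_sub_ne {A B : Set V} (h : A ⊆ B) (hne : A ≠ B) : A ⊂ B :=
  Set.ssubset_iff_subset_ne.mpr ⟨h, hne⟩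

lemma sub_ssub_trans {A B C : Set V} (h1 : A ⊆ B) (h2 : B ⊂ C) : A ⊂ C := by
  rcases Set.ssubset_iff_subset_ne.mp h2 with ⟨hs, hne⟩
  refine ssub_of_sub_ne (h1.trans hs) ?_
  rintro rfl
  exact hne (hs.antisymm h1)

lemma sInter_mem_of_chain {F : Set (Set V)} (hne : F.Nonempty)
    (hch : ∀ A ∈ F, ∀ B ∈ F, A ⊆ B ∨ B ⊆ A) : ⋂₀ F ∈ F := by
  obtain ⟨m, hm, hmin⟩ := Set.Finite.exists_minimalFor id F (Set.toFinite F) hne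
  have hmle : ∀ A ∈ F, m ⊆ A := by
    intro A hA
    rcases hch m hm A hA with h | h
    · exact h
    · exact hmin hA h
  have heq : ⋂₀ F = m :=
    subset_antisymm (Set.sInter_subset_of_mem hm) (Set.subset_sInter hmle)
  rw [heq]; exact hm

lemma sUnion_mem_of_chain {F : Set (Set V)} (hne : F.Nonempty)
    (hch : ∀ A ∈ F, ∀ B ∈ F, A ⊆ B ∨ B ⊆ A) : ⋃₀ F ∈ F := by
  obtain ⟨m, hm, hmax⟩ := Set.Finite.exists_maximalFor id F (Set.toFinite F) hne
  have hmle : ∀ A ∈ F, A ⊆ m := by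
    intro A hA
    rcases hch A hA m hm with h | h
    · exact h
    · exact hmax hA h
  have heq : ⋃₀ F = m :=
    subset_antisymm (Set.sUnion_subset hmle) (Set.subset_sUnion_of_mem hm)
  rw [heq]; exact hm

lemma PhyloTree.comparable (T : PhyloTree V) {A B : Set V} (hA : A ∈ T.clusters)
    (hB : B ∈ T.clusters) {x : V} (hxA : x ∈ A) (hxB : x ∈ B) : A ⊆ B ∨ B ⊆ A := by
  rcases T.nested A hA B hB with h | h | h
  · exact Or.inl h
  · exact Or.inr h
  · exact absurd hxB (Set.disjoint_left.mp h hxA)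

lemma PhyloTree.lca_mem (T : PhyloTree V) (x y : V) :
    T.lca x y ∈ T.clusters ∧ x ∈ T.lca x y ∧ y ∈ T.lca x y := by
  have h : T.lca x y ∈ {A | A ∈ T.clusters ∧ x ∈ A ∧ y ∈ A} := by
    apply sInter_mem_of_chain
    · exact ⟨Set.univ, T.univ_mem, Set.mem_univ x, Set.mem_univ y⟩
    · rintro A ⟨hA, hxA, -⟩ B ⟨hB, hxB, -⟩
      exact T.comparable hA hB hxA hxB
  exact h

lemma PhyloTree.lca_subset (T : PhyloTree V) {A : Set V} (hA : A ∈ T.clusters) {x y : V}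
    (hx : x ∈ A) (hy : y ∈ A) : T.lca x y ⊆ A :=
  Set.sInter_subset_of_mem ⟨hA, hx, hy⟩

lemma PhyloTree.lca_comm (T : PhyloTree V) (x y : V) : T.lca x y = T.lca y x := by
  have h : {A | A ∈ T.clusters ∧ x ∈ A ∧ y ∈ A} = {A | A ∈ T.clusters ∧ y ∈ A ∧ x ∈ A} := by
    ext A
    simp only [Set.mem_setOf_eq]
    tauto
  unfold PhyloTree.lca
  rw [h]

/-- The minimal cluster of `T` containing `x` and some leaf of color `c`. -/
def ubm (T : PhyloTree V) (σ : V → Γ) (x : V) (c : Γ) : Set V :=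
  ⋂₀ {A | A ∈ T.clusters ∧ x ∈ A ∧ ∃ s ∈ A, σ s = c}

lemma ubm_spec (T : PhyloTree V) (σ : V → Γ) (x : V) (c : Γ) (hc : ∃ s : V, σ s = c) :
    ubm T σ x c ∈ T.clusters ∧ x ∈ ubm T σ x c ∧ ∃ s ∈ ubm T σ x c, σ s = c := by
  obtain ⟨s0, hs0⟩ := hc
  have h : ubm T σ x c ∈ {A | A ∈ T.clusters ∧ x ∈ A ∧ ∃ s ∈ A, σ s = c} := by
    apply sInter_mem_of_chain
    · exact ⟨Set.univ, T.univ_mem, Set.mem_univ x, s0, Set.mem_univ s0, hs0⟩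
    · rintro A ⟨hA, hxA, -⟩ B ⟨hB, hxB, -⟩
      exact T.comparable hA hB hxA hxB
  exact h

lemma ubm_subset (T : PhyloTree V) (σ : V → Γ) {x : V} {c : Γ} {A : Set V}
    (hA : A ∈ T.clusters) (hx : x ∈ A) (hs : ∃ s ∈ A, σ s = c) : ubm T σ x c ⊆ A :=
  Set.sInter_subset_of_mem ⟨hA, hx, hs⟩

lemma bestMatch_iff (T : PhyloTree V) (σ : V → Γ) (x y : V) :
    bestMatch T σ x y ↔ σ x ≠ σ y ∧ y ∈ ubm T σ x (σ y) := by
  constructor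
  · rintro ⟨hne, h⟩
    refine ⟨hne, ?_⟩
    obtain ⟨hUcl, hxU, s, hsU, hsc⟩ := ubm_spec T σ x (σ y) ⟨y, rfl⟩
    exact (T.lca_subset hUcl hxU hsU) (h s hsc (T.lca_mem x y).2.2)
  · rintro ⟨hne, hyU⟩
    refine ⟨hne, fun y' hy' => ?_⟩
    have h1 : T.lca x y ⊆ ubm T σ x (σ y) :=
      T.lca_subset (ubm_spec T σ x (σ y) ⟨y, rfl⟩).1 (ubm_spec T σ x (σ y) ⟨y, rfl⟩).2.1 hyU
    have h2 : ubm T σ x (σ y) ⊆ T.lca x y' :=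
      ubm_subset T σ (T.lca_mem x y').1 (T.lca_mem x y').2.1 ⟨y', (T.lca_mem x y').2.2, hy'⟩
    exact h1.trans h2

lemma not_mem_lca_of_displays {T' : PhyloTree V} {p q w : V} (h : T'.Displays p q w) :
    w ∉ T'.lca p q := by
  intro hw
  have h1 : T'.lca p w ⊆ T'.lca p q :=
    T'.lca_subset (T'.lca_mem p q).1 (T'.lca_mem p q).2.1 hw
  exact ssub_absurd h.2.2.2.1 h1

lemma first_pull {T' : PhyloTree V} {a b w : V} (h : T'.Displays a b w) {P : Set V}
    (hP : P ∈ T'.clusters) (hb : b ∈ P) (hw : w ∈ P) : a ∈ P := by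
  have h1 : a ∈ T'.lca a b := (T'.lca_mem a b).2.1
  have h2 : T'.lca a b ⊆ T'.lca a w := ssub_subset h.2.2.2.1
  have h3 : T'.lca a w = T'.lca b w := h.2.2.2.2
  have h4 : T'.lca b w ⊆ P := T'.lca_subset hP hb hw
  exact h4 (h3 ▸ h2 h1)

lemma mid_pull {T' : PhyloTree V} {a b w : V} (h : T'.Displays a b w) {P : Set V}
    (hP : P ∈ T'.clusters) (ha : a ∈ P) (hw : w ∈ P) : b ∈ P := by
  have h1 : b ∈ T'.lca a b := (T'.lca_mem a b).2.2
  have h2 : T'.lca a b ⊆ T'.lca a w := ssub_subset h.2.2.2.1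
  exact (T'.lca_subset hP ha hw) (h2 h1)

lemma mem_Rbin_inf {E : V → V → Prop} {σ : V → Γ} {a b b' : V} (h1 : σ a ≠ σ b)
    (h2 : σ b = σ b') (h3 : E a b) (h4 : ¬E a b') : (a, b, b') ∈ Rbin E σ :=
  Or.inl ⟨h1, h2, h3, h4⟩

lemma mem_Rbin_forb {E : V → V → Prop} {σ : V → Γ} {a b b' : V} (h1 : σ a ≠ σ b)
    (h2 : σ b = σ b') (h3 : b ≠ b') (h4 : E a b) (h5 : E a b') : (b, b', a) ∈ Rbin E σ :=
  Or.inr ⟨h1, h2, h3, h4, h5⟩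

lemma ahoAdj_symm {R : Set (V × V × V)} {L : Set V} {x y : V} (h : ahoAdj R L x y) :
    ahoAdj R L y x := by
  obtain ⟨hx, hy, z, hz, hR⟩ := h
  exact ⟨hy, hx, z, hz, hR.symm⟩

/-- A binary tree that explains `(E,σ)` displays `R^bin(E,σ)`. -/
lemma binary_displays_Rbin {T : PhyloTree V} {σ : V → Γ} {E : V → V → Prop}
    (hbin : T.IsBinary) (hexp : Explains T σ E) : T.DisplaysSet (Rbin E σ) := by
  rintro ⟨x, y, z⟩ (⟨hxy, hyz, hExy, hnExz⟩ | ⟨hzx, hxy2, hxny, hEzx, hEzy⟩)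
  · -- informative triple
    have hbm : bestMatch T σ x y := (hexp x y).mp hExy
    have hσxz : σ x ≠ σ z := fun h => hxy (h.trans hyz.symm)
    have hnbm : ¬ bestMatch T σ x z := fun h => hnExz ((hexp x z).mpr h)
    have hy'' : ∃ w, σ w = σ z ∧ ¬ T.lca x z ⊆ T.lca x w := by
      by_contra hcon
      push_neg at hcon
      exact hnbm ⟨hσxz, fun y' hy' => hcon y' hy'⟩
    obtain ⟨w, hwσ, hwns⟩ := hy''
    have hcmp := T.comparable (T.lca_mem x z).1 (T.lca_mem x w).1
      (T.lca_mem x z).2.1 (T.lca_mem x w).2.1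
    have hss2 : T.lca x w ⊂ T.lca x z := by
      rcases hcmp with h | h
      · exact absurd h hwns
      · exact ssub_of_sub_ne h (fun he => hwns he.ge)
    have hsub : T.lca x y ⊆ T.lca x w := hbm.2 w (hwσ.trans hyz.symm)
    have hssxz : T.lca x y ⊂ T.lca x z := sub_ssub_trans hsub hss2
    have hxyne : x ≠ y := fun h => hxy (congrArg σ h)
    have hxzne : x ≠ z := fun h => hσxz (congrArg σ h)
    have hyzne : y ≠ z := fun h => hnExz (h ▸ hExy)
    have heq : T.lca x z = T.lca y z := by
      rcases T.comparable (T.lca_mem y z).1 (T.lca_mem x y).1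
          (T.lca_mem y z).2.1 (T.lca_mem x y).2.2 with h | h
      · exfalso
        have hzmem : z ∈ T.lca x y := h (T.lca_mem y z).2.2
        have hsub2 : T.lca x z ⊆ T.lca x y :=
          T.lca_subset (T.lca_mem x y).1 (T.lca_mem x y).2.1 hzmem
        exact ssub_absurd hssxz hsub2
      · have hxmem : x ∈ T.lca y z := h (T.lca_mem x y).2.1
        have h1 : T.lca x z ⊆ T.lca y z :=
          T.lca_subset (T.lca_mem y z).1 hxmem (T.lca_mem y z).2.2
        have h2 : T.lca y z ⊆ T.lca x z :=
          T.lca_subset (T.lca_mem x z).1 (ssub_subset hssxz (T.lca_mem x y).2.2)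
            (T.lca_mem x z).2.2
        exact h1.antisymm h2
    exact ⟨hxyne, hxzne, hyzne, hssxz, heq⟩
  · -- forbidden-derived triple : goal Displays x y z with (z,x,y) ∈ F
    have hbmx := (hexp z x).mp hEzx
    have hbmy := (hexp z y).mp hEzy
    have h1 : T.lca z x ⊆ T.lca z y := hbmx.2 y hxy2.symm
    have h2 : T.lca z y ⊆ T.lca z x := hbmy.2 x hxy2
    have hu : T.lca z y = T.lca z x := h2.antisymm h1
    have hzxne : z ≠ x := fun h => hzx (congrArg σ h)
    have hzy : σ z ≠ σ y := fun h => hzx (h.trans hxy2.symm)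
    have hzyne : z ≠ y := fun h => hzy (congrArg σ h)
    have hucl := (T.lca_mem z x).1
    have hcard : 1 < (T.lca z x).ncard := by
      rw [Set.one_lt_ncard_iff (Set.toFinite _)]
      exact ⟨z, x, (T.lca_mem z x).2.1, (T.lca_mem z x).2.2, hzxne⟩
    obtain ⟨B, hB, D, hD, hdisj, huni, hBs, hDs⟩ := hbin _ hucl hcard
    have key : ∀ B D : Set V, B ∈ T.clusters → D ∈ T.clusters →
        B ∪ D = T.lca z x → B ⊂ T.lca z x → D ⊂ T.lca z x → z ∈ B →
        T.Displays x y z := by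
      intro B D hB hD huni hBs hDs hzB
      have hxB : x ∉ B := by
        intro hxB
        exact ssub_absurd hBs (T.lca_subset hB hzB hxB)
      have hxD : x ∈ D := by
        have hm : x ∈ B ∪ D := by rw [huni]; exact (T.lca_mem z x).2.2
        rcases hm with h | h
        · exact absurd h hxB
        · exact h
      have hyB : y ∉ B := by
        intro hyB
        refine ssub_absurd hBs ?_
        rw [← hu]
        exact T.lca_subset hB hzB hyB
      have hyD : y ∈ D := by
        have hym : y ∈ T.lca z x := hu ▸ (T.lca_mem z y).2.2
        have hm : y ∈ B ∪ D := by rw [huni]; exact hym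
        rcases hm with h | h
        · exact absurd h hyB
        · exact h
      refine ⟨hxny, fun h => hzxne h.symm, fun h => hzyne h.symm, ?_, ?_⟩
      · have hxy_sub : T.lca x y ⊆ D := T.lca_subset hD hxD hyD
        rw [T.lca_comm x z]
        exact sub_ssub_trans hxy_sub hDs
      · rw [T.lca_comm x z, T.lca_comm y z, hu]
    have hm : z ∈ B ∪ D := by rw [huni]; exact (T.lca_mem z x).2.1
    rcases hm with h | h
    · exact key B D hB hD huni hBs hDs h
    · exact key D B hD hB (by rw [Set.union_comm]; exact huni) hDs hBs h

/-- Key lemma: if `u v` is an edge of the Aho graph `[R^bin, L]` (here given by a triple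
`(p,q,w0) ∈ R^bin` with all leaves in `L`), then for any tree `T'` displaying `R^bin`,
the cluster `lca_{T'}(p,q)` is contained in the connected component of `p`. -/
lemma lemX (Tb T' : PhyloTree V) (σ : V → Γ) (E : V → V → Prop)
    (hexp : Explains Tb σ E) (hd' : T'.DisplaysSet (Rbin E σ))
    {L : Set V} (hLb : L ∈ Tb.clusters) (hLp : L ∈ T'.clusters)
    {p q w0 z : V} (hp : p ∈ L) (hq : q ∈ L) (hw0 : w0 ∈ L) (hz : z ∈ L)
    (ht : (p, q, w0) ∈ Rbin E σ) (hzP : z ∈ T'.lca p q) :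
    Relation.ReflTransGen (ahoAdj (Rbin E σ) L) p z := by
  have hE : ∀ x y : V, E x y ↔ σ x ≠ σ y ∧ y ∈ ubm Tb σ x (σ y) :=
    fun x y => (hexp x y).trans (bestMatch_iff Tb σ x y)
  have excl : ∀ a b w : V, (a, b, w) ∈ Rbin E σ → w ∉ T'.lca a b :=
    fun a b w h => not_mem_lca_of_displays (hd' _ h)
  have hPcl := (T'.lca_mem p q).1
  have hpP := (T'.lca_mem p q).2.1
  have hqP := (T'.lca_mem p q).2.2
  have hw0P : w0 ∉ T'.lca p q := excl _ _ _ ht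
  rcases ht with ⟨hcpq, hcqw, hEpq, hnEpw⟩ | ⟨hcw0p, hcpq2, hpq, hEw0p, hEw0q⟩
  · -- CASE I: informative triple pq|w0
    obtain ⟨hUcl, hpU, sU, hsUU, hsUc⟩ := ubm_spec Tb σ p (σ q) ⟨q, rfl⟩
    have hqU : q ∈ ubm Tb σ p (σ q) := ((hE p q).mp hEpq).2
    have hw0U : w0 ∉ ubm Tb σ p (σ q) := by
      intro h
      apply hnEpw
      refine (hE p w0).mpr ⟨?_, ?_⟩
      · rw [← hcqw]; exact hcpq
      · rw [← hcqw]; exact h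
    have hUL : ubm Tb σ p (σ q) ⊆ L := ubm_subset Tb σ hLb hp ⟨q, hq, rfl⟩
    have F1 : ∀ y, y ∈ L → σ y = σ q → y ∉ ubm Tb σ p (σ q) → (p, q, y) ∈ Rbin E σ := by
      intro y hyL hyc hyU
      refine mem_Rbin_inf hcpq hyc.symm hEpq ?_
      intro h
      have h2 := ((hE p y).mp h).2
      rw [hyc] at h2
      exact hyU h2
    have F2 : ∀ y, σ y = σ q → y ∈ ubm Tb σ p (σ q) →
        Relation.ReflTransGen (ahoAdj (Rbin E σ) L) p y := by
      intro y hyc hyU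
      refine Relation.ReflTransGen.single ⟨hp, hUL hyU, w0, hw0, Or.inl (mem_Rbin_inf ?_ ?_ ?_ hnEpw)⟩
      · rw [hyc]; exact hcpq
      · rw [hyc]; exact hcqw
      · refine (hE p y).mpr ⟨?_, ?_⟩
        · rw [hyc]; exact hcpq
        · rw [hyc]; exact hyU
    by_cases hzc : σ z = σ q
    · by_cases hzU : z ∈ ubm Tb σ p (σ q)
      · exact F2 z hzc hzU
      · exact absurd hzP (excl _ _ _ (F1 z hz hzc hzU))
    · obtain ⟨hUzcl, hzUz, s, hsUz, hsc⟩ := ubm_spec Tb σ z (σ q) ⟨q, rfl⟩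
      have hUzL : ubm Tb σ z (σ q) ⊆ L := ubm_subset Tb σ hLb hz ⟨q, hq, rfl⟩
      by_cases hb : ∃ w1 ∈ L, σ w1 = σ q ∧ w1 ∉ ubm Tb σ z (σ q)
      · obtain ⟨w1, hw1L, hw1c, hw1Uz⟩ := hb
        have hEz : ∀ t, σ t = σ q → t ∈ ubm Tb σ z (σ q) → E z t := by
          intro t htc htU
          refine (hE z t).mpr ⟨?_, ?_⟩
          · rw [htc]; exact hzc
          · rw [htc]; exact htU
        have hnEzw1 : ¬ E z w1 := by
          intro h
          have h2 := ((hE z w1).mp h).2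
          rw [hw1c] at h2
          exact hw1Uz h2
        have hedge : ∀ t, σ t = σ q → t ∈ ubm Tb σ z (σ q) → ahoAdj (Rbin E σ) L z t := by
          intro t htc htU
          refine ⟨hz, hUzL htU, w1, hw1L, Or.inl (mem_Rbin_inf ?_ ?_ (hEz t htc htU) hnEzw1)⟩
          · rw [htc]; exact hzc
          · rw [htc, hw1c]
        by_cases hconn : ∃ t, σ t = σ q ∧ t ∈ ubm Tb σ z (σ q) ∧
            Relation.ReflTransGen (ahoAdj (Rbin E σ) L) p t
        · obtain ⟨t, htc, htU, hpt⟩ := hconn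
          exact hpt.tail (ahoAdj_symm (hedge t htc htU))
        · exfalso
          push_neg at hconn
          have hadjpq : ahoAdj (Rbin E σ) L p q :=
            ⟨hp, hq, w0, hw0, Or.inl (mem_Rbin_inf hcpq hcqw hEpq hnEpw)⟩
          have hqUz : q ∉ ubm Tb σ z (σ q) := fun h =>
            hconn q rfl h (Relation.ReflTransGen.single hadjpq)
          have htrip : (z, s, q) ∈ Rbin E σ :=
            mem_Rbin_inf (fun h => hzc (h.trans hsc)) hsc (hEz s hsc hsUz)
              (fun h => hqUz ((hE z q).mp h).2)
          have hqQ : q ∉ T'.lca z s := excl _ _ _ htrip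
          rcases T'.comparable hPcl (T'.lca_mem z s).1 hzP (T'.lca_mem z s).2.1 with hPQ | hQP
          · exact hqQ (hPQ hqP)
          · have hsP : s ∈ T'.lca p q := hQP (T'.lca_mem z s).2.2
            have hsU : s ∉ ubm Tb σ p (σ q) := fun h => hconn s hsc hsUz (F2 s hsc h)
            exact excl _ _ _ (F1 s (hUzL hsUz) hsc hsU) hsP
      · push_neg at hb
        have hqUz : q ∈ ubm Tb σ z (σ q) := hb q hq rfl
        have hw0Uz : w0 ∈ ubm Tb σ z (σ q) := hb w0 hw0 hcqw.symm
        have hEzq : E z q := (hE z q).mpr ⟨hzc, hqUz⟩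
        have hEzw0 : E z w0 := by
          refine (hE z w0).mpr ⟨?_, ?_⟩
          · rw [← hcqw]; exact hzc
          · rw [← hcqw]; exact hw0Uz
        have hqw0 : q ≠ w0 := fun h => hw0U (h ▸ hqU)
        have htrip2 : (q, w0, z) ∈ Rbin E σ := mem_Rbin_forb hzc hcqw hqw0 hEzq hEzw0
        have hdisp := hd' _ htrip2
        exact absurd (mid_pull hdisp hPcl hqP hzP) hw0P
  · -- CASE II: forbidden-derived triple, (w0,p,q) ∈ F
    obtain ⟨hWcl, hw0W, sW, hsWW, hsWc⟩ := ubm_spec Tb σ w0 (σ p) ⟨p, rfl⟩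
    have hpW : p ∈ ubm Tb σ w0 (σ p) := ((hE w0 p).mp hEw0p).2
    have hqW : q ∈ ubm Tb σ w0 (σ p) := by
      have h2 := ((hE w0 q).mp hEw0q).2
      rwa [← hcpq2] at h2
    have hWL : ubm Tb σ w0 (σ p) ⊆ L := ubm_subset Tb σ hLb hw0 ⟨p, hp, rfl⟩
    have G1 : ∀ y, σ y = σ p → y ∈ ubm Tb σ w0 (σ p) →
        Relation.ReflTransGen (ahoAdj (Rbin E σ) L) p y := by
      intro y hyc hyW
      by_cases hyp : y = p
      · exact hyp ▸ Relation.ReflTransGen.refl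
      · have hEw0y : E w0 y := by
          refine (hE w0 y).mpr ⟨?_, ?_⟩
          · rw [hyc]; exact hcw0p
          · rw [hyc]; exact hyW
        exact Relation.ReflTransGen.single ⟨hp, hWL hyW, w0, hw0,
          Or.inl (mem_Rbin_forb hcw0p hyc.symm (Ne.symm hyp) hEw0p hEw0y)⟩
    have G2 : ∀ y, y ∈ L → σ y = σ p → y ∉ ubm Tb σ w0 (σ p) → (w0, p, y) ∈ Rbin E σ := by
      intro y hyL hyc hyW
      refine mem_Rbin_inf hcw0p hyc.symm hEw0p ?_
      intro h
      have h2 := ((hE w0 y).mp h).2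
      rw [hyc] at h2
      exact hyW h2
    have G2' : ∀ y, y ∈ L → σ y = σ p → y ∉ ubm Tb σ w0 (σ p) → y ∈ T'.lca p q → False := by
      intro y hyL hyc hyW hyP
      have hdisp := hd' _ (G2 y hyL hyc hyW)
      exact hw0P (first_pull hdisp hPcl hpP hyP)
    by_cases hzc : σ z = σ p
    · by_cases hzW : z ∈ ubm Tb σ w0 (σ p)
      · exact G1 z hzc hzW
      · exact (G2' z hz hzc hzW hzP).elim
    · obtain ⟨hUzcl, hzUz, s, hsUz, hsc⟩ := ubm_spec Tb σ z (σ p) ⟨p, rfl⟩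
      have hUzL : ubm Tb σ z (σ p) ⊆ L := ubm_subset Tb σ hLb hz ⟨p, hp, rfl⟩
      by_cases hbb : ∃ w1 ∈ L, σ w1 = σ p ∧ w1 ∉ ubm Tb σ z (σ p)
      · obtain ⟨w1, hw1L, hw1c, hw1Uz⟩ := hbb
        have hEz : ∀ t, σ t = σ p → t ∈ ubm Tb σ z (σ p) → E z t := by
          intro t htc htU
          refine (hE z t).mpr ⟨?_, ?_⟩
          · rw [htc]; exact hzc
          · rw [htc]; exact htU
        have hnEzw1 : ¬ E z w1 := by
          intro h
          have h2 := ((hE z w1).mp h).2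
          rw [hw1c] at h2
          exact hw1Uz h2
        have hedge : ∀ t, σ t = σ p → t ∈ ubm Tb σ z (σ p) → ahoAdj (Rbin E σ) L z t := by
          intro t htc htU
          refine ⟨hz, hUzL htU, w1, hw1L, Or.inl (mem_Rbin_inf ?_ ?_ (hEz t htc htU) hnEzw1)⟩
          · rw [htc]; exact hzc
          · rw [htc, hw1c]
        by_cases hconn : ∃ t, σ t = σ p ∧ t ∈ ubm Tb σ z (σ p) ∧
            Relation.ReflTransGen (ahoAdj (Rbin E σ) L) p t
        · obtain ⟨t, htc, htU, hpt⟩ := hconn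
          exact hpt.tail (ahoAdj_symm (hedge t htc htU))
        · exfalso
          push_neg at hconn
          have hqUz : q ∉ ubm Tb σ z (σ p) := fun h =>
            hconn q hcpq2.symm h (G1 q hcpq2.symm hqW)
          have htrip : (z, s, q) ∈ Rbin E σ :=
            mem_Rbin_inf (fun h => hzc (h.trans hsc)) (hsc.trans hcpq2) (hEz s hsc hsUz)
              (fun h => hqUz (by have h2 := ((hE z q).mp h).2; rwa [← hcpq2] at h2))
          have hqQ : q ∉ T'.lca z s := excl _ _ _ htrip
          rcases T'.comparable hPcl (T'.lca_mem z s).1 hzP (T'.lca_mem z s).2.1 with hPQ | hQP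
          · exact hqQ (hPQ hqP)
          · have hsP : s ∈ T'.lca p q := hQP (T'.lca_mem z s).2.2
            have hsW : s ∉ ubm Tb σ w0 (σ p) := fun h => hconn s hsc hsUz (G1 s hsc h)
            exact G2' s (hUzL hsUz) hsc hsW hsP
      · push_neg at hbb
        have hpUz : p ∈ ubm Tb σ z (σ p) := hbb p hp rfl
        have hqUz : q ∈ ubm Tb σ z (σ p) := hbb q hq hcpq2.symm
        have hEzp : E z p := (hE z p).mpr ⟨hzc, hpUz⟩
        have hEzq : E z q := by
          refine (hE z q).mpr ⟨?_, ?_⟩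
          · rw [← hcpq2]; exact hzc
          · rw [← hcpq2]; exact hqUz
        have htrip : (p, q, z) ∈ Rbin E σ := mem_Rbin_forb hzc hcpq2 hpq hEzp hEzq
        exact absurd hzP (excl _ _ _ htrip)

lemma child_spec (T' : PhyloTree V) {K : Set V} (hKcl : K ∈ T'.clusters)
    {x0 y0 : V} (hx0 : x0 ∈ K) (hy0 : y0 ∈ K) (hne : y0 ≠ x0) :
    ∀ p : V, ∃ M : Set V, p ∈ K → (M ∈ T'.clusters ∧ p ∈ M ∧ M ⊂ K ∧
      ∀ A ∈ T'.clusters, p ∈ A → A ⊂ K → A ⊆ M) := by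
  intro p
  by_cases hpK : p ∈ K
  · have hfam : (⋃₀ {A | A ∈ T'.clusters ∧ p ∈ A ∧ A ⊂ K}) ∈
        {A | A ∈ T'.clusters ∧ p ∈ A ∧ A ⊂ K} := by
      apply sUnion_mem_of_chain
      · refine ⟨{p}, T'.singleton_mem p, rfl, ?_⟩
        refine ssub_of_sub_ne (Set.singleton_subset_iff.mpr hpK) ?_
        intro h
        apply hne
        have h1 : x0 ∈ ({p} : Set V) := by rw [h]; exact hx0
        have h2 : y0 ∈ ({p} : Set V) := by rw [h]; exact hy0
        rw [Set.mem_singleton_iff] at h1 h2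
        rw [h1, h2]
      · rintro A ⟨hA, hpA, -⟩ B ⟨hB, hpB, -⟩
        exact T'.comparable hA hB hpA hpB
    exact ⟨_, fun _ => ⟨hfam.1, hfam.2.1, hfam.2.2,
      fun A hA hpA hAK => Set.subset_sUnion_of_mem ⟨hA, hpA, hAK⟩⟩⟩
  · exact ⟨∅, fun h => absurd h hpK⟩

/-- Every Aho cluster of `R^bin` is a cluster of every tree displaying `R^bin`. -/
lemma aho_mem_clusters {E : V → V → Prop} {σ : V → Γ} (Tb : PhyloTree V)
    (hexp : Explains Tb σ E) (hdb : Tb.DisplaysSet (Rbin E σ)) :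
    ∀ A : Set V, IsAhoCluster (Rbin E σ) A →
      ∀ T' : PhyloTree V, T'.DisplaysSet (Rbin E σ) → A ∈ T'.clusters := by
  intro A hA
  induction hA with
  | univ => exact fun T' _ => T'.univ_mem
  | @component L x hL hx IH =>
    intro T' hd'
    have hLp : L ∈ T'.clusters := IH T' hd'
    have hLb : L ∈ Tb.clusters := IH Tb hdb
    have hCsub : ∀ y, Relation.ReflTransGen (ahoAdj (Rbin E σ) L) x y → y ∈ L := by
      intro y hy
      induction hy with
      | refl => exact hx
      | tail _ hadj _ => exact hadj.2.1
    have hxC : x ∈ ahoComponent (Rbin E σ) L x := Relation.ReflTransGen.refl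
    by_cases hsing : ∀ y ∈ ahoComponent (Rbin E σ) L x, y = x
    · have heq : ahoComponent (Rbin E σ) L x = {x} :=
        Set.eq_singleton_iff_unique_mem.mpr ⟨hxC, hsing⟩
      rw [heq]; exact T'.singleton_mem x
    · push_neg at hsing
      obtain ⟨y0, hy0C, hy0x⟩ := hsing
      have hKfam : ⋂₀ {A | A ∈ T'.clusters ∧ ahoComponent (Rbin E σ) L x ⊆ A} ∈
          {A | A ∈ T'.clusters ∧ ahoComponent (Rbin E σ) L x ⊆ A} := by
        apply sInter_mem_of_chain
        · exact ⟨Set.univ, T'.univ_mem, Set.subset_univ _⟩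
        · rintro A ⟨hA, hCA⟩ B ⟨hB, hCB⟩
          exact T'.comparable hA hB (hCA hxC) (hCB hxC)
      set K := ⋂₀ {A | A ∈ T'.clusters ∧ ahoComponent (Rbin E σ) L x ⊆ A} with hKdef
      obtain ⟨hKcl, hCK⟩ := hKfam
      have hKL : K ⊆ L := Set.sInter_subset_of_mem ⟨hLp, fun y hy => hCsub y hy⟩
      suffices hKC : K ⊆ ahoComponent (Rbin E σ) L x by
        have heq : ahoComponent (Rbin E σ) L x = K := Set.Subset.antisymm hCK hKC
        rw [heq]; exact hKcl
      intro z hzK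
      have hxK : x ∈ K := hCK hxC
      have hy0K : y0 ∈ K := hCK hy0C
      obtain ⟨child, hchild⟩ := Classical.axiom_of_choice
        (child_spec T' hKcl hxK hy0K hy0x)
      have hmax : ∀ p, p ∈ K → ∀ A ∈ T'.clusters, p ∈ A → A ⊂ K → A ⊆ child p :=
        fun p hp => (hchild p hp).2.2.2
      have hkey : ∀ u v, u ∈ K → v ∈ K → v ∈ child u → child u = child v := by
        intro u v hu hv hvch
        have h1 : child u ⊆ child v :=
          hmax v hv (child u) (hchild u hu).1 hvch (hchild u hu).2.2.1
        have h2 : child v ⊆ child u :=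
          hmax u hu (child v) (hchild v hv).1 (h1 (hchild u hu).2.1) (hchild v hv).2.2.1
        exact Set.Subset.antisymm h1 h2
      have hlca : ∀ u v, u ∈ K → v ∈ K → v ∉ child u → T'.lca u v = K := by
        intro u v hu hv hvch
        refine Set.Subset.antisymm (T'.lca_subset hKcl hu hv) (Set.subset_sInter ?_)
        rintro A ⟨hA, huA, hvA⟩
        rcases T'.comparable hA hKcl huA hu with hAK | hKA
        · by_cases heqA : A = K
          · exact heqA.symm.subset
          · exact absurd ((hmax u hu A hA huA (ssub_of_sub_ne hAK heqA)) hvA) hvch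
        · exact hKA
      have hcross : ∃ u v, u ∈ ahoComponent (Rbin E σ) L x ∧ ahoAdj (Rbin E σ) L u v ∧
          v ∉ child u := by
        by_contra hno
        push_neg at hno
        have hsame : ∀ y, Relation.ReflTransGen (ahoAdj (Rbin E σ) L) x y →
            child y = child x := by
          intro y hy
          induction hy with
          | refl => rfl
          | tail hpath hadj ih =>
            rw [← hkey _ _ (hCK hpath) (hCK (Relation.ReflTransGen.tail hpath hadj))
              (hno _ _ hpath hadj)]
            exact ih
        have hCchild : ahoComponent (Rbin E σ) L x ⊆ child x := by
          intro y hy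
          have h1 : child y = child x := hsame y hy
          rw [← h1]
          exact (hchild y (hCK hy)).2.1
        have h2 : K ⊆ child x :=
          Set.sInter_subset_of_mem ⟨(hchild x hxK).1, hCchild⟩
        exact ssub_absurd (hchild x hxK).2.2.1 h2
      obtain ⟨u, v, huC, hadj, hvchild⟩ := hcross
      have huC' : Relation.ReflTransGen (ahoAdj (Rbin E σ) L) x u := huC
      have hvC : Relation.ReflTransGen (ahoAdj (Rbin E σ) L) x v := huC'.tail hadj
      have hlcauv : T'.lca u v = K := hlca u v (hCK huC) (hCK hvC) hvchild
      obtain ⟨huL, hvL, w, hwL, hR | hR⟩ := hadj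
      · have hzuv : z ∈ T'.lca u v := by rw [hlcauv]; exact hzK
        have hres := lemX Tb T' σ E hexp hd' hLb hLp huL hvL hwL (hKL hzK) hR hzuv
        exact huC'.trans hres
      · have hzuv : z ∈ T'.lca v u := by rw [T'.lca_comm v u, hlcauv]; exact hzK
        have hres := lemX Tb T' σ E hexp hd' hLb hLp hvL huL hwL (hKL hzK) hR hzuv
        exact hvC.trans hres

end Aux

/-- Theorem: BRT-all-bin-trees.
Let `(G,σ)` be a binary-explainable BMG with vertex set `L` and binary-refinable tree
`(T,σ)` (the Aho tree of `R^bin(G,σ)`). Then every tree on leaf set `L` that displays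
all triples of `R^bin(G,σ)` is a refinement of `(T,σ)`. In particular, every binary
tree that explains `(G,σ)` is a refinement of `(T,σ)`. -/
theorem stmt10 {V Γ : Type*} [Fintype V] (E : V → V → Prop) (σ : V → Γ)
    (hbe : BinaryExplainable E σ)
    (T : PhyloTree V) (hT : IsAhoTree (Rbin E σ) T) :
    (∀ T' : PhyloTree V, T'.DisplaysSet (Rbin E σ) → T'.Refines T) ∧
    (∀ T' : PhyloTree V, T'.IsBinary → Explains T' σ E → T'.Refines T) := by
  obtain ⟨Tb, hbin, hexp⟩ := hbe
  have hdb : Tb.DisplaysSet (Rbin E σ) := binary_displays_Rbin hbin hexp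
  have hmain := aho_mem_clusters Tb hexp hdb
  have hT' : T.clusters = {A | IsAhoCluster (Rbin E σ) A} := hT
  have h1 : ∀ T' : PhyloTree V, T'.DisplaysSet (Rbin E σ) → T'.Refines T := by
    intro T' hd' A hA
    rw [hT'] at hA
    exact hmain A hA T' hd'
  exact ⟨h1, fun T' hbin' hexp' => h1 T' (binary_displays_Rbin hbin' hexp')⟩
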